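/- arXiv:2602.10335 — 2 statements merged into one kernel-verified Lean document; each statement's English description precedes it below -/
import Mathlib

section
/- For a < b real, the double integral ∫_a^b ∫_a^b G(t,s)^2 ds dt is at most (b-a)^4/16, where G is the Dirichlet Green's function on [a,b]. -/
open intervalIntegral

theorem green_square_integral_bound (a b : ℝ) (hab : a < b)
    (G : ℝ → ℝ → ℝ)
    (hG1 : ∀ t s, t ≤ s → G t s = (t - a) * (b - s) / (b - a))
    (hG2 : ∀ t s, s ≤ t → G t s = (s - a) * (b - t) / (b - a)) :
    (∫ t in a..b, ∫ s in a..b, (G t s) ^ 2) ≤ (b - a) ^ 4 / 16 := by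
  set F : ℝ → ℝ → ℝ := fun t s => (min ((t - a) * (b - s)) ((s - a) * (b - t)) / (b - a)) ^ 2
    with hF
  have hba : (0:ℝ) < b - a := by linarith
  have hFcont : Continuous (Function.uncurry F) := by
    apply Continuous.pow
    apply Continuous.div_const
    exact Continuous.min (by fun_prop) (by fun_prop)
  -- pointwise equality of G^2 and F on the square
  have hEq : ∀ t ∈ Set.Icc a b, ∀ s ∈ Set.Icc a b, (G t s) ^ 2 = F t s := by
    intro t ht s hs
    rcases le_total t s with h | h
    · rw [hG1 t s h, hF]
      have : min ((t - a) * (b - s)) ((s - a) * (b - t)) = (t - a) * (b - s) := by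
        apply min_eq_left
        apply mul_le_mul (by linarith) (by linarith) (by linarith [hs.2]) (by linarith [ht.1])
      simp [this]
    · rw [hG2 t s h, hF]
      have : min ((t - a) * (b - s)) ((s - a) * (b - t)) = (s - a) * (b - t) := by
        apply min_eq_right
        apply mul_le_mul (by linarith) (by linarith) (by linarith [ht.2]) (by linarith [hs.1])
      simp [this]
  -- pointwise bound on F
  have hFbd : ∀ t ∈ Set.Icc a b, ∀ s ∈ Set.Icc a b, F t s ≤ (b - a) ^ 2 / 16 := by
    intro t ht s hs
    set x := (t - a) * (b - s) with hx
    set y := (s - a) * (b - t) with hy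
    have hx0 : 0 ≤ x := mul_nonneg (by linarith [ht.1]) (by linarith [hs.2])
    have hy0 : 0 ≤ y := mul_nonneg (by linarith [hs.1]) (by linarith [ht.2])
    have hm0 : 0 ≤ min x y := le_min hx0 hy0
    have h1 : min x y ^ 2 ≤ x * y := by
      calc min x y ^ 2 = min x y * min x y := sq (min x y) ▸ sq (min x y) ▸ (sq (min x y))
      _ ≤ x * y := mul_le_mul (min_le_left _ _) (min_le_right _ _) hm0 hx0
    have h2 : x * y ≤ ((b - a) ^ 2 / 4) ^ 2 := by
      have ha1 : (t - a) * (b - t) ≤ (b - a) ^ 2 / 4 := by nlinarith [sq_nonneg (a + b - 2*t)]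
      have ha2 : (s - a) * (b - s) ≤ (b - a) ^ 2 / 4 := by nlinarith [sq_nonneg (a + b - 2*s)]
      have hb1 : 0 ≤ (t - a) * (b - t) := mul_nonneg (by linarith [ht.1]) (by linarith [ht.2])
      have hb2 : 0 ≤ (s - a) * (b - s) := mul_nonneg (by linarith [hs.1]) (by linarith [hs.2])
      calc x * y = ((t - a) * (b - t)) * ((s - a) * (b - s)) := by ring
      _ ≤ ((b - a) ^ 2 / 4) * ((b - a) ^ 2 / 4) :=
        mul_le_mul ha1 ha2 hb2 (by positivity)
      _ = ((b - a) ^ 2 / 4) ^ 2 := by ring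
    have : F t s = min x y ^ 2 / (b - a) ^ 2 := by rw [hF]; field_simp; rfl
    rw [this]
    rw [div_le_div_iff₀ (by positivity) (by norm_num)]
    nlinarith [h1, h2]
  -- rewrite the integral
  have hcongr : (∫ t in a..b, ∫ s in a..b, (G t s) ^ 2)
      = ∫ t in a..b, ∫ s in a..b, F t s := by
    apply intervalIntegral.integral_congr
    intro t ht
    rw [Set.uIcc_of_le hab.le] at ht
    apply intervalIntegral.integral_congr
    intro s hs
    rw [Set.uIcc_of_le hab.le] at hs
    exact hEq t ht s hs
  rw [hcongr]
  have hInnerCont : Continuous fun t => ∫ s in a..b, F t s :=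
    continuous_parametric_intervalIntegral_of_continuous' hFcont a b
  have hInner : ∀ t ∈ Set.Icc a b, (∫ s in a..b, F t s) ≤ (b - a) ^ 3 / 16 := by
    intro t ht
    have : (∫ s in a..b, F t s) ≤ ∫ s in a..b, (b - a) ^ 2 / 16 := by
      apply intervalIntegral.integral_mono_on hab.le
      · exact (hFcont.uncurry_left t).intervalIntegrable a b
      · exact intervalIntegrable_const
      · exact fun s hs => hFbd t ht s hs
    calc (∫ s in a..b, F t s) ≤ ∫ s in a..b, (b - a) ^ 2 / 16 := this
    _ = (b - a) * ((b - a) ^ 2 / 16) := by simp; ring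
    _ = (b - a) ^ 3 / 16 := by ring
  calc (∫ t in a..b, ∫ s in a..b, F t s) ≤ ∫ t in a..b, (b - a) ^ 3 / 16 := by
        apply intervalIntegral.integral_mono_on hab.le
        · exact hInnerCont.intervalIntegrable a b
        · exact intervalIntegrable_const
        · exact hInner
  _ = (b - a) * ((b - a) ^ 3 / 16) := by simp; ring
  _ = (b - a) ^ 4 / 16 := by ring
end

section
/- Let λ ∈ ℝ with λ ∉ {0, 2} and suppose real numbers satisfy: y(t) = A sin(√λ t) for t ∈ [0,1] with A ≠ 0, together with the discrete equations 2y₂ − y₁ = λ y₂ and y₂ = (1 − λ)y₁ + A√λ cos(√λ), where y₁ = A sin(√λ). Then (λ² − 3λ + 1) sin(√λ) + (2 − λ)√λ cos(√λ) = 0. -/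
theorem hybrid_characteristic_equation
    (lam A y1 y2 : ℝ) (hlam0 : lam ≠ 0) (hlam2 : lam ≠ 2) (hA : A ≠ 0)
    (y : ℝ → ℝ) (hy : ∀ t ∈ Set.Icc (0 : ℝ) 1, y t = A * Real.sin (Real.sqrt lam * t))
    (hy1 : y1 = A * Real.sin (Real.sqrt lam))
    (heq2 : 2 * y2 - y1 = lam * y2)
    (heq1 : y2 = (1 - lam) * y1 + A * Real.sqrt lam * Real.cos (Real.sqrt lam)) :
    (lam ^ 2 - 3 * lam + 1) * Real.sin (Real.sqrt lam) +
      (2 - lam) * Real.sqrt lam * Real.cos (Real.sqrt lam) = 0 := by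
  have key : A * ((lam ^ 2 - 3 * lam + 1) * Real.sin (Real.sqrt lam) +
      (2 - lam) * Real.sqrt lam * Real.cos (Real.sqrt lam)) = 0 := by
    linear_combination -(lam^2-3*lam+1)*hy1 - (2-lam)*heq1 + heq2
  rcases mul_eq_zero.mp key with h | h
  · exact absurd h hA
  · exact h
end
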